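/- Privacy of the small-domain frequency-estimation protocol: let n, B be positive integers, 0 < ε ≤ 3, 0 < δ < 1, and set ρ = (32·ln(2/δ)/ε²)·(B/n). Assume ρ ≤ 1. For an input dataset D = (x₁,…,x_n) ∈ [B]^n, let M(D) be the random multiset over [B] obtained by taking the multiset {x₁,…,x_n} and, independently for each user i ∈ [n], with probability ρ adding one additional element chosen uniformly from [B]. Then for any two datasets D, D' ∈ [B]^n differing in exactly one coordinate and any set Y of multisets over [B], Pr[M(D) ∈ Y] ≤ e^ε · Pr[M(D') ∈ Y] + δ. -/

import Mathlib

open scoped ENNReal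

noncomputable def uniformBin (m : ℕ) (hm : 0 < m) : PMF (Fin m) :=
  PMF.uniformOfFinset Finset.univ
    (Finset.univ_nonempty_iff.mpr (Fin.pos_iff_nonempty.mp hm))

/-- Sum of `n` independent copies of a random multiset. -/
noncomputable def repeatMS {α : Type*} (ν : PMF (Multiset α)) : ℕ → PMF (Multiset α)
  | 0 => PMF.pure 0
  | n + 1 => ν.bind fun s => (repeatMS ν n).map (s + ·)

/-- The old `PMF.bernoulli` (with an `ℝ≥0∞` parameter), which assigns probability `p`
to `true` and `1 - p` to `false`. -/
noncomputable def bernoulliPMF (p : ℝ≥0∞) (h : p ≤ 1) : PMF Bool :=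
  PMF.ofFintype (fun b => cond b p (1 - p)) (by simp [h])

/-- With probability `p`, one draw from `ν`; otherwise nothing. -/
noncomputable def trialM {α : Type*} (ν : PMF α) (p : ℝ≥0∞) (hp : p ≤ 1) : PMF (Multiset α) :=
  (bernoulliPMF p hp).bind fun b => if b then ν.map (fun x => {x}) else PMF.pure 0

/-- The small-domain frequency-estimation mechanism: the multiset of the `n` true
inputs, plus, independently for each user, one uniform blanket-noise element with
probability `ρ`. -/
noncomputable def MFE0 (B n : ℕ) (hB : 0 < B) (ρ : ℝ≥0∞) (hρ : ρ ≤ 1)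
    (D : Fin n → Fin B) : PMF (Multiset (Fin B)) :=
  (repeatMS (trialM (uniformBin B hB) ρ hρ) n).map fun N =>
    Multiset.map D Finset.univ.val + N

section part1

variable {B : ℕ} (hB : 0 < B) (r : ℝ≥0∞) (hr : r ≤ 1)

/-- value of mapping by cons -/
lemma map_cons_apply {α : Type*} [DecidableEq α] (p : PMF (Multiset α)) (z : α) (T : Multiset α) :
    (p.map (z ::ₘ ·)) T = if z ∈ T then p (T.erase z) else 0 := by
  rw [PMF.map_apply]
  split_ifs with h
  · rw [tsum_eq_single (T.erase z)]
    · rw [if_pos (Multiset.cons_erase h).symm]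
    · intro N hN
      rw [if_neg]
      intro hT
      exact hN (by rw [hT, Multiset.erase_cons_head])
  · refine ENNReal.tsum_eq_zero.mpr fun N => ?_
    rw [if_neg]
    intro hT
    exact h (hT ▸ Multiset.mem_cons_self z N)

lemma trial_bind (q : PMF (Multiset (Fin B))) (T : Multiset (Fin B)) :
    ((trialM (uniformBin B hB) r hr).bind fun s => q.map (s + ·)) T =
      (1 - r) * q T +
        r * (B : ℝ≥0∞)⁻¹ *
          ∑ z : Fin B, (if z ∈ T then q (T.erase z) else 0) := by
  set Q : ℕ → PMF (Multiset (Fin B)) := fun _ => q with hQ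
  have : (trialM (uniformBin B hB) r hr).bind (fun s => q.map (s + ·))
      = (bernoulliPMF r hr).bind fun b =>
          (if b then (uniformBin B hB).map (fun x => ({x} : Multiset (Fin B))) else PMF.pure 0).bind
            (fun s => (Q 0).map (s + ·)) := by
    rw [trialM, PMF.bind_bind]
  rw [this, PMF.bind_apply, tsum_bool]
  have hfalse : ((PMF.pure (0 : Multiset (Fin B))).bind fun s => (Q 0).map (s + ·)) T = Q 0 T := by
    rw [PMF.pure_bind]
    have h0 : ((0 : Multiset (Fin B)) + ·) = id := funext fun N => zero_add N
    rw [h0, PMF.map_id]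
  have htrue : (((uniformBin B hB).map (fun x => ({x} : Multiset (Fin B)))).bind
      fun s => (Q 0).map (s + ·)) T
      = (B : ℝ≥0∞)⁻¹ * ∑ z : Fin B, (if z ∈ T then Q 0 (T.erase z) else 0) := by
    rw [PMF.bind_map, PMF.bind_apply, tsum_fintype]
    rw [Finset.mul_sum]
    refine Finset.sum_congr rfl fun z _ => ?_
    have h1 : uniformBin B hB z = (B : ℝ≥0∞)⁻¹ := by
      simp [uniformBin, PMF.uniformOfFinset_apply]
    have h2 : ((fun s => (Q 0).map (s + ·)) ∘ fun x => ({x} : Multiset (Fin B))) z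
        = (Q 0).map (z ::ₘ ·) := by
      have hfun : (fun N => ({z} : Multiset (Fin B)) + N) = (z ::ₘ ·) :=
        funext fun N => Multiset.singleton_add z N
      show (Q 0).map (fun N => ({z} : Multiset (Fin B)) + N) = _
      rw [hfun]
    rw [h1, h2, map_cons_apply]
  simp only [Bool.cond_false, Bool.cond_true, bernoulliPMF, PMF.ofFintype_apply, if_true, if_false,
    Bool.false_eq_true]
  rw [hfalse, htrue]
  ring

lemma Qsucc (n : ℕ) (T : Multiset (Fin B)) :
    repeatMS (trialM (uniformBin B hB) r hr) (n + 1) T =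
      (1 - r) * repeatMS (trialM (uniformBin B hB) r hr) n T +
        r * (B : ℝ≥0∞)⁻¹ *
          ∑ z : Fin B, (if z ∈ T then repeatMS (trialM (uniformBin B hB) r hr) n (T.erase z) else 0) :=
  trial_bind hB r hr _ T

end part1

section part2

variable {B : ℕ} (hB : 0 < B) (r : ℝ≥0∞) (hr : r ≤ 1)

lemma swap (x y : Fin B) (n : ℕ) : ∀ S : Multiset (Fin B),
    ((S.count x : ℝ≥0∞) + 1) * repeatMS (trialM (uniformBin B hB) r hr) n (x ::ₘ S) =
      ((S.count y : ℝ≥0∞) + 1) * repeatMS (trialM (uniformBin B hB) r hr) n (y ::ₘ S) := by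
  rcases eq_or_ne x y with rfl | hxy
  · intro S; rfl
  induction n with
  | zero =>
    intro S
    show _ * (PMF.pure 0) (x ::ₘ S) = _ * (PMF.pure 0) (y ::ₘ S)
    simp [PMF.pure_apply, Multiset.cons_ne_zero]
  | succ n IH =>
    intro S
    have hyx : y ≠ x := hxy.symm
    set Q : ℕ → PMF (Multiset (Fin B)) := repeatMS (trialM (uniformBin B hB) r hr) with hQdef
    set Tx : Fin B → ℝ≥0∞ := fun z => if z ∈ S then Q n (x ::ₘ S.erase z) else 0 with hTx
    set Ty : Fin B → ℝ≥0∞ := fun z => if z ∈ S then Q n (y ::ₘ S.erase z) else 0 with hTy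
    set U : Finset (Fin B) := (Finset.univ.erase x).erase y with hU
    have hAx : (∑ z : Fin B, if z ∈ x ::ₘ S then Q n ((x ::ₘ S).erase z) else 0)
        = Q n S + (Tx y + ∑ z ∈ U, Tx z) := by
      rw [← Finset.sum_erase_add _ _ (Finset.mem_univ x)]
      have hxmem : (if x ∈ x ::ₘ S then Q n ((x ::ₘ S).erase x) else 0) = Q n S := by
        rw [if_pos (Multiset.mem_cons_self x S), Multiset.erase_cons_head]
      have hsum : (∑ z ∈ Finset.univ.erase x, if z ∈ x ::ₘ S then Q n ((x ::ₘ S).erase z) else 0)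
          = ∑ z ∈ Finset.univ.erase x, Tx z := by
        refine Finset.sum_congr rfl fun z hz => ?_
        have hzx : z ≠ x := (Finset.mem_erase.mp hz).1
        simp only [hTx]
        by_cases hzS : z ∈ S
        · rw [if_pos (Multiset.mem_cons_of_mem hzS), if_pos hzS,
            Multiset.erase_cons_tail S hzx.symm]
        · rw [if_neg (by simp [Multiset.mem_cons, hzx, hzS]), if_neg hzS]
      rw [hxmem, hsum, ← Finset.sum_erase_add _ _
        (Finset.mem_erase.mpr ⟨hyx, Finset.mem_univ y⟩)]
      ring
    have hAy : (∑ z : Fin B, if z ∈ y ::ₘ S then Q n ((y ::ₘ S).erase z) else 0)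
        = Q n S + (Ty x + ∑ z ∈ U, Ty z) := by
      rw [← Finset.sum_erase_add _ _ (Finset.mem_univ y)]
      have hymem : (if y ∈ y ::ₘ S then Q n ((y ::ₘ S).erase y) else 0) = Q n S := by
        rw [if_pos (Multiset.mem_cons_self y S), Multiset.erase_cons_head]
      have hsum : (∑ z ∈ Finset.univ.erase y, if z ∈ y ::ₘ S then Q n ((y ::ₘ S).erase z) else 0)
          = ∑ z ∈ Finset.univ.erase y, Ty z := by
        refine Finset.sum_congr rfl fun z hz => ?_
        have hzy : z ≠ y := (Finset.mem_erase.mp hz).1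
        simp only [hTy]
        by_cases hzS : z ∈ S
        · rw [if_pos (Multiset.mem_cons_of_mem hzS), if_pos hzS,
            Multiset.erase_cons_tail S hzy.symm]
        · rw [if_neg (by simp [Multiset.mem_cons, hzy, hzS]), if_neg hzS]
      rw [hymem, hsum, ← Finset.sum_erase_add _ _
        (Finset.mem_erase.mpr ⟨hxy, Finset.mem_univ x⟩), Finset.erase_right_comm]
      ring
    have h1 : ((S.count x : ℝ≥0∞) + 1) * Q n (x ::ₘ S)
        = ((S.count y : ℝ≥0∞) + 1) * Q n (y ::ₘ S) := IH S
    have h2 : ((S.count x : ℝ≥0∞) + 1) * ∑ z ∈ U, Tx z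
        = ((S.count y : ℝ≥0∞) + 1) * ∑ z ∈ U, Ty z := by
      rw [Finset.mul_sum, Finset.mul_sum]
      refine Finset.sum_congr rfl fun z hz => ?_
      have hzy : z ≠ y := (Finset.mem_erase.mp hz).1
      have hzx : z ≠ x := (Finset.mem_erase.mp (Finset.mem_erase.mp hz).2).1
      by_cases hzS : z ∈ S
      · rw [hTx, hTy]
        simp only [if_pos hzS]
        have := IH (S.erase z)
        rwa [Multiset.count_erase_of_ne hzx.symm, Multiset.count_erase_of_ne hzy.symm] at this
      · simp [hTx, hTy, hzS]
    have h3 : ((S.count x : ℝ≥0∞) + 1) * Q n S + ((S.count x : ℝ≥0∞) + 1) * Tx y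
        = ((S.count y : ℝ≥0∞) + 1) * Q n S + ((S.count y : ℝ≥0∞) + 1) * Ty x := by
      by_cases hy : y ∈ S <;> by_cases hx : x ∈ S
      · have e1 : ((S.count x : ℝ≥0∞) + 1) * Q n (x ::ₘ S.erase y)
            = (S.count y : ℝ≥0∞) * Q n S := by
          have := IH (S.erase y)
          rw [Multiset.count_erase_of_ne hxy, Multiset.count_erase_self,
            Multiset.cons_erase hy] at this
          rw [this]
          have hc : ((S.count y - 1 : ℕ) : ℝ≥0∞) + 1 = (S.count y : ℝ≥0∞) := by
            have h' : S.count y - 1 + 1 = S.count y :=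
              Nat.succ_pred_eq_of_pos (Multiset.count_pos.mpr hy)
            conv_rhs => rw [← h']
            push_cast
            ring
          rw [hc]
        have e2 : ((S.count y : ℝ≥0∞) + 1) * Q n (y ::ₘ S.erase x)
            = (S.count x : ℝ≥0∞) * Q n S := by
          have := (IH (S.erase x)).symm
          rw [Multiset.count_erase_of_ne hyx, Multiset.count_erase_self,
            Multiset.cons_erase hx] at this
          rw [this]
          have hc : ((S.count x - 1 : ℕ) : ℝ≥0∞) + 1 = (S.count x : ℝ≥0∞) := by
            have h' : S.count x - 1 + 1 = S.count x :=
              Nat.succ_pred_eq_of_pos (Multiset.count_pos.mpr hx)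
            conv_rhs => rw [← h']
            push_cast
            ring
          rw [hc]
        rw [hTx, hTy]
        simp only [if_pos hy, if_pos hx]
        rw [e1, e2]
        ring
      · have hcx : S.count x = 0 := Multiset.count_eq_zero.mpr hx
        have e1 : ((S.count x : ℝ≥0∞) + 1) * Q n (x ::ₘ S.erase y)
            = (S.count y : ℝ≥0∞) * Q n S := by
          have := IH (S.erase y)
          rw [Multiset.count_erase_of_ne hxy, Multiset.count_erase_self,
            Multiset.cons_erase hy] at this
          rw [this]
          have hc : ((S.count y - 1 : ℕ) : ℝ≥0∞) + 1 = (S.count y : ℝ≥0∞) := by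
            have h' : S.count y - 1 + 1 = S.count y :=
              Nat.succ_pred_eq_of_pos (Multiset.count_pos.mpr hy)
            conv_rhs => rw [← h']
            push_cast
            ring
          rw [hc]
        rw [hTx, hTy]
        simp only [if_pos hy, if_neg hx]
        rw [e1, hcx]
        push_cast
        ring
      · have hcy : S.count y = 0 := Multiset.count_eq_zero.mpr hy
        have e2 : ((S.count y : ℝ≥0∞) + 1) * Q n (y ::ₘ S.erase x)
            = (S.count x : ℝ≥0∞) * Q n S := by
          have := (IH (S.erase x)).symm
          rw [Multiset.count_erase_of_ne hyx, Multiset.count_erase_self,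
            Multiset.cons_erase hx] at this
          rw [this]
          have hc : ((S.count x - 1 : ℕ) : ℝ≥0∞) + 1 = (S.count x : ℝ≥0∞) := by
            have h' : S.count x - 1 + 1 = S.count x :=
              Nat.succ_pred_eq_of_pos (Multiset.count_pos.mpr hx)
            conv_rhs => rw [← h']
            push_cast
            ring
          rw [hc]
        rw [hTx, hTy]
        simp only [if_neg hy, if_pos hx]
        rw [e2, hcy]
        push_cast
        ring
      · have hcx : S.count x = 0 := Multiset.count_eq_zero.mpr hx
        have hcy : S.count y = 0 := Multiset.count_eq_zero.mpr hy
        rw [hTx, hTy]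
        simp only [if_neg hy, if_neg hx]
        rw [hcx, hcy]
    show ((S.count x : ℝ≥0∞) + 1) * Q (n + 1) (x ::ₘ S)
        = ((S.count y : ℝ≥0∞) + 1) * Q (n + 1) (y ::ₘ S)
    rw [show Q (n+1) (x ::ₘ S) = (1 - r) * Q n (x ::ₘ S) + r * (B : ℝ≥0∞)⁻¹ *
        ∑ z : Fin B, (if z ∈ x ::ₘ S then Q n ((x ::ₘ S).erase z) else 0) from
        Qsucc hB r hr n (x ::ₘ S),
      show Q (n+1) (y ::ₘ S) = (1 - r) * Q n (y ::ₘ S) + r * (B : ℝ≥0∞)⁻¹ *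
        ∑ z : Fin B, (if z ∈ y ::ₘ S then Q n ((y ::ₘ S).erase z) else 0) from
        Qsucc hB r hr n (y ::ₘ S),
      hAx, hAy]
    have expandL : ((S.count x : ℝ≥0∞) + 1) *
        ((1 - r) * Q n (x ::ₘ S) + r * (B : ℝ≥0∞)⁻¹ * (Q n S + (Tx y + ∑ z ∈ U, Tx z)))
        = (1 - r) * (((S.count x : ℝ≥0∞) + 1) * Q n (x ::ₘ S))
          + r * (B : ℝ≥0∞)⁻¹ * ((((S.count x : ℝ≥0∞) + 1) * Q n S
              + ((S.count x : ℝ≥0∞) + 1) * Tx y)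
            + ((S.count x : ℝ≥0∞) + 1) * ∑ z ∈ U, Tx z) := by ring
    have expandR : ((S.count y : ℝ≥0∞) + 1) *
        ((1 - r) * Q n (y ::ₘ S) + r * (B : ℝ≥0∞)⁻¹ * (Q n S + (Ty x + ∑ z ∈ U, Ty z)))
        = (1 - r) * (((S.count y : ℝ≥0∞) + 1) * Q n (y ::ₘ S))
          + r * (B : ℝ≥0∞)⁻¹ * ((((S.count y : ℝ≥0∞) + 1) * Q n S
              + ((S.count y : ℝ≥0∞) + 1) * Ty x)
            + ((S.count y : ℝ≥0∞) + 1) * ∑ z ∈ U, Ty z) := by ring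
    rw [expandL, expandR, h1, h2, h3]

end part2

section part3

variable {B : ℕ} (hB : 0 < B) (r : ℝ≥0∞) (hr : r ≤ 1)

lemma count_mul_erase (a b : Fin B) (hab : a ≠ b) (n : ℕ) (M : Multiset (Fin B))
    (ha : a ∈ M) (hb : b ∈ M) :
    (M.count a : ℝ≥0∞) * repeatMS (trialM (uniformBin B hB) r hr) n (M.erase b) =
      (M.count b : ℝ≥0∞) * repeatMS (trialM (uniformBin B hB) r hr) n (M.erase a) := by
  have hbS : b ∈ M.erase a := (Multiset.mem_erase_of_ne hab.symm).mpr hb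
  have haS : a ∈ M.erase b := (Multiset.mem_erase_of_ne hab).mpr ha
  have e1 : a ::ₘ (M.erase a).erase b = M.erase b := by
    rw [Multiset.erase_comm]; exact Multiset.cons_erase haS
  have e2 : b ::ₘ (M.erase a).erase b = M.erase a := Multiset.cons_erase hbS
  have hca : (((M.erase a).erase b).count a : ℝ≥0∞) + 1 = (M.count a : ℝ≥0∞) := by
    rw [Multiset.count_erase_of_ne hab, Multiset.count_erase_self]
    have h' : M.count a - 1 + 1 = M.count a :=
      Nat.succ_pred_eq_of_pos (Multiset.count_pos.mpr ha)
    conv_rhs => rw [← h']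
    push_cast
    ring
  have hcb : (((M.erase a).erase b).count b : ℝ≥0∞) + 1 = (M.count b : ℝ≥0∞) := by
    rw [Multiset.count_erase_self, Multiset.count_erase_of_ne hab.symm]
    have h' : M.count b - 1 + 1 = M.count b :=
      Nat.succ_pred_eq_of_pos (Multiset.count_pos.mpr hb)
    conv_rhs => rw [← h']
    push_cast
    ring
  have := swap hB r hr a b n ((M.erase a).erase b)
  rwa [e1, e2, hca, hcb] at this

lemma exp_bind {α β : Type*} (p : PMF α) (f : α → PMF β) (g : β → ℝ≥0∞) :
    ∑' b, (p.bind f) b * g b = ∑' a, p a * ∑' b, (f a) b * g b := by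
  calc (∑' b, (p.bind f) b * g b) = ∑' b, ∑' a, p a * (f a) b * g b := by
        refine tsum_congr fun b => ?_
        rw [PMF.bind_apply, ← ENNReal.tsum_mul_right]
    _ = ∑' a, ∑' b, p a * (f a) b * g b := ENNReal.tsum_comm
    _ = ∑' a, p a * ∑' b, (f a) b * g b := tsum_congr fun a => by
        rw [← ENNReal.tsum_mul_left]
        exact tsum_congr fun b => by ring

lemma exp_map {α β : Type*} (p : PMF α) (h : α → β) (g : β → ℝ≥0∞) :
    ∑' b, (p.map h) b * g b = ∑' a, p a * g (h a) := by
  show ∑' b, (p.bind (PMF.pure ∘ h)) b * g b = _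
  rw [exp_bind]
  refine tsum_congr fun a => ?_
  congr 1
  rw [tsum_eq_single (h a) (fun b hb => by
    simp only [Function.comp_apply, PMF.pure_apply, if_neg hb, zero_mul])]
  simp [PMF.pure_apply]

lemma mgf_Q (z : Fin B) (t : ℝ≥0∞) : ∀ n : ℕ,
    (∑' N : Multiset (Fin B), repeatMS (trialM (uniformBin B hB) r hr) n N * t ^ (N.count z))
      = ((1 - r) + r * (B : ℝ≥0∞)⁻¹ * (((B - 1 : ℕ) : ℝ≥0∞) + t)) ^ n := by
  intro n
  induction n with
  | zero =>
    show (∑' N : Multiset (Fin B), PMF.pure 0 N * t ^ (N.count z)) = _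
    rw [tsum_eq_single (0 : Multiset (Fin B)) (fun N hN => by
      simp [PMF.pure_apply, hN, if_neg hN])]
    simp [PMF.pure_apply]
  | succ n IH =>
    have hrw : repeatMS (trialM (uniformBin B hB) r hr) (n + 1)
        = (trialM (uniformBin B hB) r hr).bind
            (fun s => (repeatMS (trialM (uniformBin B hB) r hr) n).map (s + ·)) := rfl
    rw [hrw, exp_bind]
    have hinner : ∀ s : Multiset (Fin B),
        (∑' N : Multiset (Fin B),
          ((repeatMS (trialM (uniformBin B hB) r hr) n).map (s + ·)) N * t ^ (N.count z))
          = t ^ (s.count z) *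
            ((1 - r) + r * (B : ℝ≥0∞)⁻¹ * (((B - 1 : ℕ) : ℝ≥0∞) + t)) ^ n := by
      intro s
      rw [exp_map, ← IH, ← ENNReal.tsum_mul_left]
      refine tsum_congr fun N => ?_
      rw [show ((s + N).count z) = s.count z + N.count z from Multiset.count_add z s N, pow_add]
      ring
    calc (∑' s : Multiset (Fin B), (trialM (uniformBin B hB) r hr) s *
            ∑' N : Multiset (Fin B),
              ((repeatMS (trialM (uniformBin B hB) r hr) n).map (s + ·)) N * t ^ (N.count z))
        = (∑' s : Multiset (Fin B), (trialM (uniformBin B hB) r hr) s * t ^ (s.count z)) *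
            ((1 - r) + r * (B : ℝ≥0∞)⁻¹ * (((B - 1 : ℕ) : ℝ≥0∞) + t)) ^ n := by
          rw [← ENNReal.tsum_mul_right]
          refine tsum_congr fun s => ?_
          rw [hinner s]
          ring
      _ = ((1 - r) + r * (B : ℝ≥0∞)⁻¹ * (((B - 1 : ℕ) : ℝ≥0∞) + t)) ^ (n + 1) := by
          have hW : (∑' s : Multiset (Fin B), (trialM (uniformBin B hB) r hr) s * t ^ (s.count z))
              = (1 - r) + r * (B : ℝ≥0∞)⁻¹ * (((B - 1 : ℕ) : ℝ≥0∞) + t) := by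
            show (∑' s : Multiset (Fin B),
              ((bernoulliPMF r hr).bind fun b =>
                if b then (uniformBin B hB).map (fun x => ({x} : Multiset (Fin B)))
                else PMF.pure 0) s * t ^ (s.count z)) = _
            rw [exp_bind, tsum_bool]
            have hfalse : (∑' s : Multiset (Fin B),
                (PMF.pure (0 : Multiset (Fin B))) s * t ^ (s.count z)) = 1 := by
              rw [tsum_eq_single (0 : Multiset (Fin B)) (fun N hN => by
                simp [PMF.pure_apply, if_neg hN])]
              simp [PMF.pure_apply]
            have htrue : (∑' s : Multiset (Fin B),
                ((uniformBin B hB).map (fun x => ({x} : Multiset (Fin B)))) s * t ^ (s.count z))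
                = (B : ℝ≥0∞)⁻¹ * ((((B - 1 : ℕ) : ℝ≥0∞)) + t) := by
              rw [exp_map, tsum_fintype]
              have huni : ∀ x : Fin B, uniformBin B hB x = (B : ℝ≥0∞)⁻¹ := by
                intro x; simp [uniformBin, PMF.uniformOfFinset_apply]
              calc (∑ x : Fin B, uniformBin B hB x * t ^ (Multiset.count z {x}))
                  = ∑ x : Fin B, (B : ℝ≥0∞)⁻¹ * t ^ (if z = x then 1 else 0) := by
                    refine Finset.sum_congr rfl fun x _ => ?_
                    rw [huni x, Multiset.count_singleton]
                _ = (∑ x ∈ Finset.univ.erase z, (B : ℝ≥0∞)⁻¹ * t ^ (if z = x then 1 else 0))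
                      + (B : ℝ≥0∞)⁻¹ * t := by
                    rw [← Finset.sum_erase_add _ _ (Finset.mem_univ z), if_pos rfl, pow_one]
                _ = (((B - 1 : ℕ) : ℝ≥0∞)) * (B : ℝ≥0∞)⁻¹ + (B : ℝ≥0∞)⁻¹ * t := by
                    congr 1
                    rw [Finset.sum_congr rfl (fun x hx => by
                      rw [if_neg (Ne.symm (Finset.mem_erase.mp hx).1), pow_zero, mul_one]),
                      Finset.sum_const, Finset.card_erase_of_mem (Finset.mem_univ z),
                      Finset.card_univ, Fintype.card_fin, nsmul_eq_mul]
                _ = (B : ℝ≥0∞)⁻¹ * ((((B - 1 : ℕ) : ℝ≥0∞)) + t) := by ring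
            simp only [Bool.cond_false, Bool.cond_true, bernoulliPMF, PMF.ofFintype_apply, if_true, if_false,
              Bool.false_eq_true]
            rw [hfalse, htrue]
            ring
          rw [hW, pow_succ]
          ring

section part4

variable {B : ℕ} (hB : 0 < B)

lemma mgf_real {ρ : ℝ} (h0 : 0 ≤ ρ) (h1 : ρ ≤ 1) (z : Fin B) (τ : ℝ) (hτ : 0 ≤ τ) (n : ℕ) :
    (∑' N : Multiset (Fin B),
      repeatMS (trialM (uniformBin B hB) (ENNReal.ofReal ρ) (ENNReal.ofReal_le_one.mpr h1)) n N *
        (ENNReal.ofReal τ) ^ (N.count z))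
      = ENNReal.ofReal ((1 + ρ / B * (τ - 1)) ^ n) := by
  have hBR : (0 : ℝ) < B := Nat.cast_pos.mpr hB
  have hbase : (1 - ENNReal.ofReal ρ) + ENNReal.ofReal ρ * (B : ℝ≥0∞)⁻¹ *
      (((B - 1 : ℕ) : ℝ≥0∞) + ENNReal.ofReal τ) = ENNReal.ofReal (1 + ρ / B * (τ - 1)) := by
    have e1 : (1 : ℝ≥0∞) - ENNReal.ofReal ρ = ENNReal.ofReal (1 - ρ) := by
      rw [ENNReal.ofReal_sub _ h0, ENNReal.ofReal_one]
    have e2 : (B : ℝ≥0∞)⁻¹ = ENNReal.ofReal (B : ℝ)⁻¹ := by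
      rw [ENNReal.ofReal_inv_of_pos hBR, ENNReal.ofReal_natCast]
    have e3 : ((B - 1 : ℕ) : ℝ≥0∞) + ENNReal.ofReal τ
        = ENNReal.ofReal (((B - 1 : ℕ) : ℝ) + τ) := by
      rw [ENNReal.ofReal_add (Nat.cast_nonneg _) hτ, ENNReal.ofReal_natCast]
    rw [e1, e2, e3, ← ENNReal.ofReal_mul h0, ← ENNReal.ofReal_mul (by positivity),
      ← ENNReal.ofReal_add (by linarith) (by positivity)]
    congr 1
    have hB1 : ((B - 1 : ℕ) : ℝ) = (B : ℝ) - 1 := by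
      rw [Nat.cast_sub hB, Nat.cast_one]
    rw [hB1]
    field_simp
    ring
  rw [mgf_Q, hbase, ENNReal.ofReal_pow]
  nlinarith [div_nonneg h0 (le_of_lt (Nat.cast_pos.mpr hB)),
    div_le_one_of_le₀ (le_trans h1 (by exact_mod_cast hB)) (le_of_lt (Nat.cast_pos.mpr hB)),
    mul_nonneg (div_nonneg h0 (le_of_lt (Nat.cast_pos.mpr hB))) hτ]

lemma tail_bound {ρ : ℝ} (h0 : 0 ≤ ρ) (h1 : ρ ≤ 1) (z : Fin B) (n : ℕ) (cond : Multiset (Fin B) → Prop) [DecidablePred cond]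
    (τ c : ℝ) (hτ : 0 ≤ τ)
    (hρB : ρ / B ≤ 1)
    (hpt : ∀ N : Multiset (Fin B), cond N → Real.exp c ≤ τ ^ (N.count z)) :
    (∑' N : Multiset (Fin B), if cond N then
        repeatMS (trialM (uniformBin B hB) (ENNReal.ofReal ρ) (ENNReal.ofReal_le_one.mpr h1)) n N
      else 0)
      ≤ ENNReal.ofReal (Real.exp ((n : ℝ) * (ρ / B) * (τ - 1) - c)) := by
  set Q := repeatMS (trialM (uniformBin B hB) (ENNReal.ofReal ρ) (ENNReal.ofReal_le_one.mpr h1))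
    with hQ
  have hp0 : 0 ≤ ρ / B := div_nonneg h0 (Nat.cast_nonneg _)
  have key : (∑' N : Multiset (Fin B), if cond N then Q n N else 0) *
      ENNReal.ofReal (Real.exp c) ≤ ENNReal.ofReal (Real.exp ((n : ℝ) * (ρ / B) * (τ - 1))) := by
    calc (∑' N : Multiset (Fin B), if cond N then Q n N else 0) * ENNReal.ofReal (Real.exp c)
        = ∑' N : Multiset (Fin B), (if cond N then Q n N else 0) * ENNReal.ofReal (Real.exp c) :=
          ENNReal.tsum_mul_right.symm
      _ ≤ ∑' N : Multiset (Fin B), Q n N * (ENNReal.ofReal τ) ^ (N.count z) := by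
          refine ENNReal.tsum_le_tsum fun N => ?_
          by_cases h : cond N
          · rw [if_pos h]
            refine mul_le_mul_right ?_ _
            rw [← ENNReal.ofReal_pow hτ]
            exact ENNReal.ofReal_le_ofReal (hpt N h)
          · rw [if_neg h, zero_mul]
            exact zero_le
      _ = ENNReal.ofReal ((1 + ρ / B * (τ - 1)) ^ n) := mgf_real hB h0 h1 z τ hτ n
      _ ≤ ENNReal.ofReal (Real.exp ((n : ℝ) * (ρ / B) * (τ - 1))) := by
          refine ENNReal.ofReal_le_ofReal ?_
          have hxnn : 0 ≤ 1 + ρ / B * (τ - 1) := by nlinarith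
          calc (1 + ρ / B * (τ - 1)) ^ n ≤ (Real.exp (ρ / B * (τ - 1))) ^ n := by
                refine pow_le_pow_left₀ hxnn ?_ n
                have := Real.add_one_le_exp (ρ / B * (τ - 1))
                linarith
            _ = Real.exp ((n : ℝ) * (ρ / B * (τ - 1))) := (Real.exp_nat_mul _ n).symm
            _ = Real.exp ((n : ℝ) * (ρ / B) * (τ - 1)) := by ring_nf
  have hne0 : ENNReal.ofReal (Real.exp c) ≠ 0 :=
    ne_of_gt (ENNReal.ofReal_pos.mpr (Real.exp_pos c))
  rw [show Real.exp ((n : ℝ) * (ρ / B) * (τ - 1) - c)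
      = Real.exp ((n : ℝ) * (ρ / B) * (τ - 1)) / Real.exp c from Real.exp_sub _ _,
    ENNReal.ofReal_div_of_pos (Real.exp_pos c),
    ENNReal.le_div_iff_mul_le (Or.inl hne0) (Or.inl ENNReal.ofReal_ne_top)]
  exact key

end part4

section part5

set_option maxHeartbeats 1000000 in
lemma numeric_bounds (ε δ : ℝ) (hε0 : 0 < ε) (hε3 : ε ≤ 3) (hδ0 : 0 < δ) (hδ1 : δ < 1) :
    ∃ u l : ℝ,
      (32 * Real.log (2 / δ) / ε ^ 2) * (Real.exp (ε / 2) - 1) - (ε / 2) * u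
          = -Real.log (2 / δ) ∧
      (32 * Real.log (2 / δ) / ε ^ 2) * (Real.exp (-(ε / 2)) - 1) + (ε / 2) * l
          = -Real.log (2 / δ) ∧
      u + 1 ≤ Real.exp ε * l := by
  set L := Real.log (2 / δ) with hLdef
  set μ := 32 * L / ε ^ 2 with hμdef
  set y := Real.exp (ε / 2) with hydef
  have hc : (2/3 : ℝ) < Real.log 2 := by
    have h := Real.log_two_gt_d9
    linarith
  have hL2 : Real.log 2 ≤ L := by
    rw [hLdef, Real.log_div two_ne_zero (ne_of_gt hδ0)]
    have := Real.log_nonpos (le_of_lt hδ0) (le_of_lt hδ1)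
    linarith
  have hL0 : 0 < L := lt_of_lt_of_le (by linarith) hL2
  have hμ0 : 0 < μ := by rw [hμdef]; positivity
  have hεne : ε ≠ 0 := ne_of_gt hε0
  have hy0 : 0 < y := Real.exp_pos _
  refine ⟨(μ * (y - 1) + L) / (ε / 2), (μ * (1 - y⁻¹) - L) / (ε / 2), ?_, ?_, ?_⟩
  · field_simp
    ring
  · rw [Real.exp_neg]
    field_simp
    ring
  · -- main inequality
    have h4 := Real.sum_le_exp_of_nonneg (show (0:ℝ) ≤ ε / 2 by positivity) 4
    have hy : 1 + ε / 2 + ε ^ 2 / 8 + ε ^ 3 / 48 ≤ y := by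
      have hs : (∑ i ∈ Finset.range 4, (ε / 2) ^ i / (Nat.factorial i : ℝ))
          = 1 + ε / 2 + ε ^ 2 / 8 + ε ^ 3 / 48 := by
        simp [Finset.sum_range_succ, Nat.factorial]
        ring
      rw [hs] at h4
      exact h4
    have hyy : Real.exp ε = y * y := by
      rw [hydef, ← Real.exp_add]
      norm_num
    have hLμ : L = μ * ε ^ 2 / 32 := by
      rw [hμdef]
      field_simp
    have hsum : 2 + ε ≤ y + (1 + ε / 2 + ε ^ 2 / 8 + ε ^ 3 / 48) := by nlinarith
    have h2eps : (0:ℝ) ≤ 2 - ε ^ 2 / 16 := by nlinarith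
    have hslope : 0 ≤ (2 - ε ^ 2 / 16) * (y + (1 + ε / 2 + ε ^ 2 / 8 + ε ^ 3 / 48)) - 4 := by
      nlinarith [mul_le_mul_of_nonneg_left hsum h2eps]
    have hbase0 : 0 ≤ 2 * ((1 + ε / 2 + ε ^ 2 / 8 + ε ^ 3 / 48) - 1) ^ 2
        - (ε ^ 2 / 16) * (1 + (1 + ε / 2 + ε ^ 2 / 8 + ε ^ 3 / 48) ^ 2)
        - ε ^ 3 / (32 * (2/3 : ℝ)) := by
      have h2 : ε ^ 2 ≤ 9 := by nlinarith
      have h4 : ε ^ 4 ≤ 9 * ε ^ 2 := by nlinarith [sq_nonneg ε, sq_nonneg (ε^2)]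
      have h5 : ε ^ 5 ≤ 27 * ε ^ 2 := by nlinarith [pow_pos hε0 2, pow_pos hε0 3]
      have h6 : ε ^ 6 ≤ 81 * ε ^ 2 := by nlinarith [pow_pos hε0 2, pow_pos hε0 4, h4]
      have h7 : ε ^ 7 ≤ 243 * ε ^ 2 := by nlinarith [pow_pos hε0 2, pow_pos hε0 5, h5]
      have h8 : ε ^ 8 ≤ 729 * ε ^ 2 := by nlinarith [pow_pos hε0 2, pow_pos hε0 6, h6]
      have hexpand : 2 * ((1 + ε / 2 + ε ^ 2 / 8 + ε ^ 3 / 48) - 1) ^ 2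
          - (ε ^ 2 / 16) * (1 + (1 + ε / 2 + ε ^ 2 / 8 + ε ^ 3 / 48) ^ 2)
          - ε ^ 3 / (32 * (2/3 : ℝ))
          = (3/8) * ε ^ 2 + (9/64) * ε ^ 3 + (1/24) * ε ^ 4
            - (13/9216) * ε ^ 6 - (1/3072) * ε ^ 7 - (1/36864) * ε ^ 8 := by ring
      rw [hexpand]
      have hp3 : 0 < ε ^ 3 := pow_pos hε0 3
      have hp4 : 0 < ε ^ 4 := pow_pos hε0 4
      have hp2 : 0 < ε ^ 2 := pow_pos hε0 2
      linarith [h6, h7, h8]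
    have hg : 0 ≤ 2 * (y - 1) ^ 2 - (ε ^ 2 / 16) * (1 + y ^ 2)
        - ε ^ 3 / (32 * (2/3 : ℝ)) := by
      have hid : 2 * (y - 1) ^ 2 - (ε ^ 2 / 16) * (1 + y ^ 2)
          = 2 * ((1 + ε / 2 + ε ^ 2 / 8 + ε ^ 3 / 48) - 1) ^ 2
            - (ε ^ 2 / 16) * (1 + (1 + ε / 2 + ε ^ 2 / 8 + ε ^ 3 / 48) ^ 2)
            + (y - (1 + ε / 2 + ε ^ 2 / 8 + ε ^ 3 / 48)) *
              ((2 - ε ^ 2 / 16) * (y + (1 + ε / 2 + ε ^ 2 / 8 + ε ^ 3 / 48)) - 4) := by ring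
      rw [hid]
      linarith [mul_nonneg (sub_nonneg.mpr hy) hslope, hbase0]
    have hKε : ε * ((2 / ε) * (y - 1) ^ 2 - (ε / 16) * (1 + y ^ 2))
        = 2 * (y - 1) ^ 2 - (ε ^ 2 / 16) * (1 + y ^ 2) := by
      field_simp <;> ring
    have h5 : ε ^ 3 / (32 * (2/3 : ℝ))
        ≤ ε * ((2 / ε) * (y - 1) ^ 2 - (ε / 16) * (1 + y ^ 2)) := by
      rw [hKε]; linarith
    have h6 : ε ^ 2 / (32 * (2/3 : ℝ))
        ≤ (2 / ε) * (y - 1) ^ 2 - (ε / 16) * (1 + y ^ 2) := by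
      have hre : ε ^ 3 / (32 * (2/3 : ℝ))
          = ε * (ε ^ 2 / (32 * (2/3 : ℝ))) := by ring
      rw [hre] at h5
      exact (mul_le_mul_iff_right₀ hε0).mp h5
    have hK : ε ^ 2 / (32 * Real.log 2)
        ≤ (2 / ε) * (y - 1) ^ 2 - (ε / 16) * (1 + y ^ 2) := by
      refine le_trans ?_ h6
      apply div_le_div_of_nonneg_left (by positivity) (by norm_num) (by linarith)
    have key : 1 ≤ μ * ((2 / ε) * (y - 1) ^ 2 - (ε / 16) * (1 + y ^ 2)) := by
      have hμlb : 32 * Real.log 2 / ε ^ 2 ≤ μ := by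
        rw [hμdef]
        gcongr
      calc (1 : ℝ) = (32 * Real.log 2 / ε ^ 2) * (ε ^ 2 / (32 * Real.log 2)) := by
            have hl2 : (0:ℝ) < Real.log 2 := by linarith
            field_simp
        _ ≤ μ * ((2 / ε) * (y - 1) ^ 2 - (ε / 16) * (1 + y ^ 2)) :=
            mul_le_mul hμlb hK (by positivity) (le_of_lt (lt_of_lt_of_le (by positivity) hμlb))
    have hexp : Real.exp ε * ((μ * (1 - y⁻¹) - L) / (ε / 2))
        - ((μ * (y - 1) + L) / (ε / 2) + 1)
        = μ * ((2 / ε) * (y - 1) ^ 2 - (ε / 16) * (1 + y ^ 2)) - 1 := by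
      rw [hyy, hLμ]
      have hyne : y ≠ 0 := ne_of_gt hy0
      field_simp <;> ring
    linarith

lemma tsum_cons_change {α : Type*} [DecidableEq α] (a : α) (F : Multiset α → ℝ≥0∞) :
    (∑' N : Multiset α, F (a ::ₘ N)) = ∑' M : Multiset α, if a ∈ M then F M else 0 := by
  classical
  have step : (∑' N : Multiset α, F (a ::ₘ N)) = ∑' M : {M : Multiset α // a ∈ M}, F M.1 := by
    exact Equiv.tsum_eq
      (⟨fun N => ⟨a ::ₘ N, Multiset.mem_cons_self a N⟩, fun M => M.1.erase a,
        fun N => Multiset.erase_cons_head a N, fun M => Subtype.ext (Multiset.cons_erase M.2)⟩ :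
        Multiset α ≃ {M : Multiset α // a ∈ M})
      (fun M : {M : Multiset α // a ∈ M} => F M.1)
  calc (∑' N : Multiset α, F (a ::ₘ N))
      = ∑' M : {M : Multiset α // a ∈ M}, F M.1 := step
    _ = ∑' M : Multiset α, Set.indicator {M : Multiset α | a ∈ M} F M :=
        tsum_subtype {M : Multiset α | a ∈ M} F
    _ = ∑' M : Multiset α, if a ∈ M then F M else 0 := tsum_congr fun M => by
        by_cases h : a ∈ M <;> simp [Set.indicator_apply, Set.mem_setOf_eq, h]


theorem stmt9 (n B : ℕ) (hn : 0 < n) (hB : 0 < B)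
    (ε δ : ℝ) (hε0 : 0 < ε) (hε3 : ε ≤ 3) (hδ0 : 0 < δ) (hδ1 : δ < 1)
    (ρ : ℝ) (hρ : ρ = 32 * Real.log (2 / δ) / ε ^ 2 * ((B : ℝ) / n)) (hρ1 : ρ ≤ 1)
    (D D' : Fin n → Fin B) (i₀ : Fin n)
    (hdiff : D i₀ ≠ D' i₀) (hsame : ∀ i, i ≠ i₀ → D i = D' i)
    (Y : Set (Multiset (Fin B))) :
    ((MFE0 B n hB (ENNReal.ofReal ρ) (ENNReal.ofReal_le_one.mpr hρ1) D).toOuterMeasure Y).toReal ≤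
      Real.exp ε *
        ((MFE0 B n hB (ENNReal.ofReal ρ) (ENNReal.ofReal_le_one.mpr hρ1) D').toOuterMeasure
          Y).toReal + δ := by
  classical
  have hnR : (0 : ℝ) < n := Nat.cast_pos.mpr hn
  have hBR : (0 : ℝ) < B := Nat.cast_pos.mpr hB
  have hc : (2/3 : ℝ) < Real.log 2 := by
    have h := Real.log_two_gt_d9; linarith
  have hL2 : Real.log 2 ≤ Real.log (2 / δ) := by
    rw [Real.log_div two_ne_zero (ne_of_gt hδ0)]
    have := Real.log_nonpos (le_of_lt hδ0) (le_of_lt hδ1)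
    linarith
  have hL0 : 0 < Real.log (2 / δ) := lt_of_lt_of_le (by linarith) hL2
  have hρ0 : 0 ≤ ρ := by
    rw [hρ]; positivity
  set hr : ENNReal.ofReal ρ ≤ 1 := ENNReal.ofReal_le_one.mpr hρ1 with hrdef
  set Q := repeatMS (trialM (uniformBin B hB) (ENNReal.ofReal ρ) hr) with hQdef
  set a := D i₀ with hadef
  set b := D' i₀ with hbdef
  have hab : a ≠ b := hdiff
  set C : Multiset (Fin B) := Multiset.map D ((Finset.univ.erase i₀).val) with hCdef
  have hval : (Finset.univ : Finset (Fin n)).val = i₀ ::ₘ (Finset.univ.erase i₀).val := by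
    rw [Finset.erase_val]
    exact (Multiset.cons_erase (Finset.mem_val.mpr (Finset.mem_univ i₀))).symm
  have hbaseD : Multiset.map D (Finset.univ : Finset (Fin n)).val = a ::ₘ C := by
    conv_lhs => rw [hval]
    rw [Multiset.map_cons]
  have hbaseD' : Multiset.map D' (Finset.univ : Finset (Fin n)).val = b ::ₘ C := by
    conv_lhs => rw [hval]
    rw [Multiset.map_cons]
    congr 1
    refine Multiset.map_congr rfl fun x hx => ?_
    have hxne : x ≠ i₀ := by
      have : x ∈ Finset.univ.erase i₀ := Finset.mem_val.mp hx
      exact (Finset.mem_erase.mp this).1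
    exact (hsame x hxne).symm
  set Y₂ : Set (Multiset (Fin B)) := (fun M => C + M) ⁻¹' Y with hY₂def
  have hpre : ∀ c : Fin B, (fun N => (c ::ₘ C) + N) ⁻¹' Y = (fun N => c ::ₘ N) ⁻¹' Y₂ := by
    intro c
    ext N
    have h1 : (c ::ₘ C) + N = c ::ₘ (C + N) := Multiset.cons_add c C N
    have h2 : C + (c ::ₘ N) = c ::ₘ (C + N) := by
      rw [add_comm, Multiset.cons_add, add_comm N C]
    show (c ::ₘ C) + N ∈ Y ↔ C + (c ::ₘ N) ∈ Y
    rw [h1, h2]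
  -- the key ENNReal inequality
  have keyineq : (∑' N : Multiset (Fin B), if (a ::ₘ N) ∈ Y₂ then Q n N else 0)
      ≤ ENNReal.ofReal (Real.exp ε) *
          (∑' N : Multiset (Fin B), if (b ::ₘ N) ∈ Y₂ then Q n N else 0)
        + ENNReal.ofReal δ := by
    have hba : b ≠ a := hab.symm
    have hεne : ε ≠ 0 := ne_of_gt hε0
    have hρB : ρ / B ≤ 1 := by
      rw [div_le_one hBR]
      calc ρ ≤ 1 := hρ1
        _ ≤ B := by exact_mod_cast hB
    obtain ⟨u, l, hu1, hl1, hul⟩ := numeric_bounds ε δ hε0 hε3 hδ0 hδ1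
    have hμeq : (n : ℝ) * (ρ / B) = 32 * Real.log (2 / δ) / ε ^ 2 := by
      rw [hρ]
      field_simp
    have hexpL : Real.exp (-Real.log (2 / δ)) = δ / 2 := by
      rw [Real.exp_neg, Real.exp_log (by positivity), inv_div]
    set Gd : Multiset (Fin B) → Prop :=
      fun M => ((M.count a : ℝ)) ≤ Real.exp ε * (M.count b) with hGd
    have hstep1 : (∑' N : Multiset (Fin B), if (a ::ₘ N) ∈ Y₂ then Q n N else 0)
        = ∑' M : Multiset (Fin B), if a ∈ M ∧ M ∈ Y₂ then Q n (M.erase a) else 0 := by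
      have h0 : ∀ N : Multiset (Fin B), (if (a ::ₘ N) ∈ Y₂ then Q n N else 0)
          = (fun M => if M ∈ Y₂ then Q n (M.erase a) else 0) (a ::ₘ N) := by
        intro N
        simp only [Multiset.erase_cons_head]
      rw [tsum_congr h0, tsum_cons_change a (fun M => if M ∈ Y₂ then Q n (M.erase a) else 0)]
      refine tsum_congr fun M => ?_
      by_cases h1 : a ∈ M <;> by_cases h2 : M ∈ Y₂ <;> simp [h1, h2]
    have hstep1b : (∑' N : Multiset (Fin B), if (b ::ₘ N) ∈ Y₂ then Q n N else 0)
        = ∑' M : Multiset (Fin B), if b ∈ M ∧ M ∈ Y₂ then Q n (M.erase b) else 0 := by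
      have h0 : ∀ N : Multiset (Fin B), (if (b ::ₘ N) ∈ Y₂ then Q n N else 0)
          = (fun M => if M ∈ Y₂ then Q n (M.erase b) else 0) (b ::ₘ N) := by
        intro N
        simp only [Multiset.erase_cons_head]
      rw [tsum_congr h0, tsum_cons_change b (fun M => if M ∈ Y₂ then Q n (M.erase b) else 0)]
      refine tsum_congr fun M => ?_
      by_cases h1 : b ∈ M <;> by_cases h2 : M ∈ Y₂ <;> simp [h1, h2]
    rw [hstep1, hstep1b]
    have hsplit : (∑' M : Multiset (Fin B), if a ∈ M ∧ M ∈ Y₂ then Q n (M.erase a) else 0)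
        ≤ (∑' M : Multiset (Fin B), if a ∈ M ∧ M ∈ Y₂ ∧ Gd M then Q n (M.erase a) else 0)
          + ∑' M : Multiset (Fin B), if a ∈ M ∧ ¬ Gd M then Q n (M.erase a) else 0 := by
      rw [← ENNReal.tsum_add]
      refine ENNReal.tsum_le_tsum fun M => ?_
      by_cases h1 : a ∈ M <;> by_cases h2 : M ∈ Y₂ <;> by_cases h3 : Gd M <;>
        simp [h1, h2, h3]
    have hgood : (∑' M : Multiset (Fin B), if a ∈ M ∧ M ∈ Y₂ ∧ Gd M then Q n (M.erase a) else 0)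
        ≤ ENNReal.ofReal (Real.exp ε) *
            ∑' M : Multiset (Fin B), if b ∈ M ∧ M ∈ Y₂ then Q n (M.erase b) else 0 := by
      rw [← ENNReal.tsum_mul_left]
      refine ENNReal.tsum_le_tsum fun M => ?_
      by_cases h : a ∈ M ∧ M ∈ Y₂ ∧ Gd M
      · obtain ⟨h1, h2, h3⟩ := h
        rw [if_pos ⟨h1, h2, h3⟩]
        have hca1 : 1 ≤ M.count a := Multiset.count_pos.mpr h1
        have hbM : b ∈ M := by
          by_contra hbM
          have h0 : M.count b = 0 := Multiset.count_eq_zero.mpr hbM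
          have h3' := h3
          rw [hGd] at h3'
          simp only [h0, Nat.cast_zero, mul_zero] at h3'
          have : (1 : ℝ) ≤ (M.count a : ℝ) := by exact_mod_cast hca1
          linarith
        rw [if_pos ⟨hbM, h2⟩]
        have hswap := count_mul_erase hB (ENNReal.ofReal ρ) hr a b hab n M h1 hbM
        rw [← hQdef] at hswap
        have hcb0 : (M.count b : ℝ≥0∞) ≠ 0 := by
          exact_mod_cast Multiset.count_ne_zero.mpr hbM
        have hcbt : (M.count b : ℝ≥0∞) ≠ ⊤ := ENNReal.natCast_ne_top _
        refine (ENNReal.mul_le_mul_iff_right hcb0 hcbt).mp ?_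
        rw [← hswap]
        have hle : (M.count a : ℝ≥0∞) ≤ ENNReal.ofReal (Real.exp ε) * (M.count b : ℝ≥0∞) := by
          calc (M.count a : ℝ≥0∞) = ENNReal.ofReal ((M.count a : ℝ)) :=
                (ENNReal.ofReal_natCast _).symm
            _ ≤ ENNReal.ofReal (Real.exp ε * ((M.count b : ℕ) : ℝ)) :=
                ENNReal.ofReal_le_ofReal h3
            _ = ENNReal.ofReal (Real.exp ε) * ENNReal.ofReal (((M.count b : ℕ)) : ℝ) :=
                ENNReal.ofReal_mul (Real.exp_nonneg ε)
            _ = ENNReal.ofReal (Real.exp ε) * (M.count b : ℝ≥0∞) := by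
                rw [ENNReal.ofReal_natCast]
        calc (M.count a : ℝ≥0∞) * Q n (M.erase b)
            ≤ (ENNReal.ofReal (Real.exp ε) * (M.count b : ℝ≥0∞)) * Q n (M.erase b) :=
              mul_le_mul_left hle _
          _ = (M.count b : ℝ≥0∞) * (ENNReal.ofReal (Real.exp ε) * Q n (M.erase b)) := by ring
      · rw [if_neg h]
        exact zero_le
    have hbadrw : (∑' M : Multiset (Fin B), if a ∈ M ∧ ¬ Gd M then Q n (M.erase a) else 0)
        = ∑' N : Multiset (Fin B), if ¬ Gd (a ::ₘ N) then Q n N else 0 := by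
      calc (∑' M : Multiset (Fin B), if a ∈ M ∧ ¬ Gd M then Q n (M.erase a) else 0)
          = ∑' M : Multiset (Fin B),
              if a ∈ M then (if ¬ Gd M then Q n (M.erase a) else 0) else 0 :=
            tsum_congr fun M => by
              by_cases h1 : a ∈ M <;> by_cases h2 : Gd M <;> simp [h1, h2]
        _ = ∑' N : Multiset (Fin B), if ¬ Gd (a ::ₘ N) then Q n ((a ::ₘ N).erase a) else 0 :=
            (tsum_cons_change a (fun M => if ¬ Gd M then Q n (M.erase a) else 0)).symm
        _ = ∑' N : Multiset (Fin B), if ¬ Gd (a ::ₘ N) then Q n N else 0 :=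
            tsum_congr fun N => by rw [Multiset.erase_cons_head]
    have hcount : ∀ N : Multiset (Fin B), ¬ Gd (a ::ₘ N) ↔
        Real.exp ε * (N.count b : ℝ) < (N.count a : ℝ) + 1 := by
      intro N
      rw [hGd]
      simp only [Multiset.count_cons_self, Multiset.count_cons_of_ne hba]
      push_cast
      exact not_le
    have hunion : (∑' N : Multiset (Fin B), if ¬ Gd (a ::ₘ N) then Q n N else 0)
        ≤ (∑' N : Multiset (Fin B), if u ≤ (N.count a : ℝ) then Q n N else 0)
          + ∑' N : Multiset (Fin B), if (N.count b : ℝ) ≤ l then Q n N else 0 := by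
      rw [← ENNReal.tsum_add]
      refine ENNReal.tsum_le_tsum fun N => ?_
      by_cases hbad : ¬ Gd (a ::ₘ N)
      · rw [if_pos hbad]
        by_cases h1 : u ≤ (N.count a : ℝ)
        · rw [if_pos h1]
          exact le_self_add
        · have h2 : (N.count b : ℝ) ≤ l := by
            by_contra h2
            have hG := (hcount N).mp hbad
            have hmul : Real.exp ε * l < Real.exp ε * (N.count b : ℝ) :=
              mul_lt_mul_of_pos_left (not_le.mp h2) (Real.exp_pos ε)
            have hca : (N.count a : ℝ) < u := not_le.mp h1
            linarith
          rw [if_pos h2, if_neg h1]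
          exact le_add_self
      · rw [if_neg hbad]
        exact zero_le
    have htailu : (∑' N : Multiset (Fin B), if u ≤ (N.count a : ℝ) then Q n N else 0)
        ≤ ENNReal.ofReal (δ / 2) := by
      have ht := tail_bound hB hρ0 hρ1 a n (fun N => u ≤ (N.count a : ℝ))
        (Real.exp (ε / 2)) ((ε / 2) * u) (Real.exp_nonneg _) hρB ?_
      · rw [← hrdef, ← hQdef] at ht
        calc (∑' N : Multiset (Fin B), if u ≤ (N.count a : ℝ) then Q n N else 0)
            ≤ ENNReal.ofReal
                (Real.exp ((n : ℝ) * (ρ / B) * (Real.exp (ε / 2) - 1) - ε / 2 * u)) := ht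
          _ = ENNReal.ofReal (δ / 2) := by
              rw [show (n : ℝ) * (ρ / B) * (Real.exp (ε / 2) - 1) - ε / 2 * u
                  = -Real.log (2 / δ) by rw [hμeq]; linarith [hu1], hexpL]
      · intro N hN
        rw [← Real.exp_nat_mul]
        refine Real.exp_le_exp.mpr ?_
        have h := mul_le_mul_of_nonneg_left hN (show (0:ℝ) ≤ ε / 2 by positivity)
        linarith
    have htaill : (∑' N : Multiset (Fin B), if (N.count b : ℝ) ≤ l then Q n N else 0)
        ≤ ENNReal.ofReal (δ / 2) := by
      have ht := tail_bound hB hρ0 hρ1 b n (fun N => (N.count b : ℝ) ≤ l)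
        (Real.exp (-(ε / 2))) (-((ε / 2) * l)) (Real.exp_nonneg _) hρB ?_
      · rw [← hrdef, ← hQdef] at ht
        calc (∑' N : Multiset (Fin B), if (N.count b : ℝ) ≤ l then Q n N else 0)
            ≤ ENNReal.ofReal
                (Real.exp ((n : ℝ) * (ρ / B) * (Real.exp (-(ε / 2)) - 1) - -(ε / 2 * l))) := ht
          _ = ENNReal.ofReal (δ / 2) := by
              rw [show (n : ℝ) * (ρ / B) * (Real.exp (-(ε / 2)) - 1) - -(ε / 2 * l)
                  = -Real.log (2 / δ) by rw [hμeq]; linarith [hl1], hexpL]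
      · intro N hN
        rw [← Real.exp_nat_mul]
        refine Real.exp_le_exp.mpr ?_
        have h := mul_le_mul_of_nonneg_left hN (show (0:ℝ) ≤ ε / 2 by positivity)
        linarith
    calc (∑' M : Multiset (Fin B), if a ∈ M ∧ M ∈ Y₂ then Q n (M.erase a) else 0)
        ≤ (∑' M : Multiset (Fin B), if a ∈ M ∧ M ∈ Y₂ ∧ Gd M then Q n (M.erase a) else 0)
          + ∑' M : Multiset (Fin B), if a ∈ M ∧ ¬ Gd M then Q n (M.erase a) else 0 := hsplit
      _ ≤ (ENNReal.ofReal (Real.exp ε) *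
            ∑' M : Multiset (Fin B), if b ∈ M ∧ M ∈ Y₂ then Q n (M.erase b) else 0)
          + (ENNReal.ofReal (δ / 2) + ENNReal.ofReal (δ / 2)) := by
          refine add_le_add hgood ?_
          rw [hbadrw]
          exact le_trans hunion (add_le_add htailu htaill)
      _ = ENNReal.ofReal (Real.exp ε) *
            (∑' M : Multiset (Fin B), if b ∈ M ∧ M ∈ Y₂ then Q n (M.erase b) else 0)
          + ENNReal.ofReal δ := by
          rw [← ENNReal.ofReal_add (by positivity) (by positivity)]
          norm_num
  -- rewrite the goal in terms of the tsums
  have htoOuter : ∀ (E : Fin n → Fin B) (c : Fin B),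
      Multiset.map E (Finset.univ : Finset (Fin n)).val = c ::ₘ C →
      (MFE0 B n hB (ENNReal.ofReal ρ) hr E).toOuterMeasure Y
        = ∑' N : Multiset (Fin B), if (c ::ₘ N) ∈ Y₂ then Q n N else 0 := by
    intro E c hE
    show ((Q n).map fun N => Multiset.map E Finset.univ.val + N).toOuterMeasure Y = _
    rw [PMF.toOuterMeasure_map_apply, hE, hpre c, PMF.toOuterMeasure_apply]
    refine tsum_congr fun N => ?_
    by_cases h : (c ::ₘ N) ∈ Y₂
    · rw [Set.indicator_of_mem (by exact h), if_pos h]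
    · rw [Set.indicator_of_notMem (by exact h), if_neg h]
  rw [htoOuter D a hbaseD, htoOuter D' b hbaseD']
  -- convert to reals
  have hPb1 : (∑' N : Multiset (Fin B), if (b ::ₘ N) ∈ Y₂ then Q n N else 0) ≤ 1 := by
    calc (∑' N : Multiset (Fin B), if (b ::ₘ N) ∈ Y₂ then Q n N else 0)
        ≤ ∑' N : Multiset (Fin B), Q n N := ENNReal.tsum_le_tsum fun N => by
          split_ifs <;> simp
      _ = 1 := (Q n).tsum_coe
  have hPbne : (∑' N : Multiset (Fin B), if (b ::ₘ N) ∈ Y₂ then Q n N else 0) ≠ ⊤ :=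
    ne_top_of_le_ne_top ENNReal.one_ne_top hPb1
  have hmulne : ENNReal.ofReal (Real.exp ε) *
      (∑' N : Multiset (Fin B), if (b ::ₘ N) ∈ Y₂ then Q n N else 0) ≠ ⊤ :=
    ENNReal.mul_ne_top ENNReal.ofReal_ne_top hPbne
  have hRHSne : ENNReal.ofReal (Real.exp ε) *
      (∑' N : Multiset (Fin B), if (b ::ₘ N) ∈ Y₂ then Q n N else 0) + ENNReal.ofReal δ ≠ ⊤ :=
    ENNReal.add_ne_top.mpr ⟨hmulne, ENNReal.ofReal_ne_top⟩
  calc (∑' N : Multiset (Fin B), if (a ::ₘ N) ∈ Y₂ then Q n N else 0).toReal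
      ≤ (ENNReal.ofReal (Real.exp ε) *
          (∑' N : Multiset (Fin B), if (b ::ₘ N) ∈ Y₂ then Q n N else 0)
        + ENNReal.ofReal δ).toReal := ENNReal.toReal_mono hRHSne keyineq
    _ = Real.exp ε *
          (∑' N : Multiset (Fin B), if (b ::ₘ N) ∈ Y₂ then Q n N else 0).toReal + δ := by
        rw [ENNReal.toReal_add hmulne ENNReal.ofReal_ne_top, ENNReal.toReal_mul,
          ENNReal.toReal_ofReal (Real.exp_nonneg ε), ENNReal.toReal_ofReal (le_of_lt hδ0)]
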